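/- For any unit vector c ∈ ℂ^d with discrete Fourier transform ĉ, the Shannon entropies satisfy S({|c_l|²}) + S({|ĉ_k|²}) ≥ log d. -/

import Mathlib

open scoped BigOperators Classical ComplexOrder

/-- The primitive `d`-th root of unity `η = e^{2πi/d}`. -/
noncomputable def eta (d : ℕ) : ℂ := Complex.exp (2 * (Real.pi : ℂ) * Complex.I / d)

/-- Discrete Fourier transform: `ĉ_k = (1/√d) Σ_l η^{kl} c_l`. -/
noncomputable def dft (d : ℕ) (c : Fin d → ℂ) : Fin d → ℂ := fun k =>
  (1 / (Real.sqrt d : ℂ)) * ∑ l : Fin d, eta d ^ ((k : ℕ) * (l : ℕ)) * c l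

/-- Number of nonzero components of a vector. -/
noncomputable def suppCard (d : ℕ) (c : Fin d → ℂ) : ℕ :=
  (Finset.univ.filter fun l => c l ≠ 0).card


/-- Shannon entropy of a probability vector. -/
noncomputable def shannonEntropy (d : ℕ) (p : Fin d → ℝ) : ℝ :=
  -∑ i, p i * Real.log (p i)

open Finset

lemma eta_abs (d : ℕ) : ‖eta d‖ = 1 := by
  rw [eta, Complex.norm_exp]
  norm_num [Complex.div_re]

lemma eta_ne_zero (d : ℕ) : eta d ≠ 0 := Complex.exp_ne_zero _

lemma eta_conj (d : ℕ) : (starRingEnd ℂ) (eta d) = (eta d)⁻¹ := by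
  rw [Complex.inv_def, Complex.normSq_eq_norm_sq, eta_abs]
  simp

lemma eta_prim (d : ℕ) (hd : d ≠ 0) : IsPrimitiveRoot (eta d) d :=
  Complex.isPrimitiveRoot_exp d hd

lemma eta_orth (d : ℕ) (hd : d ≠ 0) (l m : Fin d) :
    ∑ k : Fin d, eta d ^ ((k : ℕ) * (l : ℕ)) * (starRingEnd ℂ) (eta d ^ ((k : ℕ) * (m : ℕ)))
      = if l = m then (d : ℂ) else 0 := by
  have hterm : ∀ k : Fin d,
      eta d ^ ((k : ℕ) * (l : ℕ)) * (starRingEnd ℂ) (eta d ^ ((k : ℕ) * (m : ℕ)))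
        = (eta d ^ (l : ℕ) * ((eta d ^ (m : ℕ))⁻¹ : ℂ)) ^ (k : ℕ) := by
    intro k
    rw [map_pow, eta_conj, mul_pow, ← inv_pow]
    rw [mul_comm ((k:ℕ)) ((l:ℕ)), pow_mul, mul_comm ((k:ℕ)) ((m:ℕ)), pow_mul, inv_pow]
  simp only [hterm]
  rcases eq_or_ne l m with h | h
  · subst h
    simp [mul_inv_cancel₀ (pow_ne_zero _ (eta_ne_zero d))]
  · have hne : eta d ^ (l : ℕ) * ((eta d ^ (m : ℕ))⁻¹ : ℂ) ≠ 1 := by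
      intro hcontr
      have : eta d ^ (l : ℕ) = eta d ^ (m : ℕ) := by
        field_simp at hcontr
        exact (div_eq_one_iff_eq (pow_ne_zero _ (eta_ne_zero d))).mp hcontr
      exact h (Fin.ext ((eta_prim d hd).pow_inj l.isLt m.isLt this))
    rw [if_neg h, Fin.sum_univ_eq_sum_range (fun k => (eta d ^ (l:ℕ) * ((eta d ^ (m:ℕ))⁻¹ : ℂ)) ^ k),
      geom_sum_eq hne]
    have hd1 : (eta d ^ (l : ℕ) * ((eta d ^ (m : ℕ))⁻¹ : ℂ)) ^ d = 1 := by
      have h1 : eta d ^ d = 1 := (eta_prim d hd).pow_eq_one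
      rw [mul_pow, inv_pow, ← pow_mul, ← pow_mul, mul_comm (l:ℕ) d, mul_comm (m:ℕ) d,
        pow_mul, pow_mul, h1, one_pow, one_pow, inv_one, mul_one]
    rw [hd1]
    simp

lemma parseval (d : ℕ) (hd : d ≠ 0) (v : Fin d → ℂ) :
    ∑ k, ‖dft d v k‖ ^ 2 = ∑ l, ‖v l‖ ^ 2 := by
  have key : ∑ k, (dft d v k * (starRingEnd ℂ) (dft d v k)) = ∑ l, (v l * (starRingEnd ℂ) (v l)) := by
    have hsqrt : ((Real.sqrt d : ℂ)) * ((Real.sqrt d : ℂ)) = (d : ℂ) := by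
      rw [← Complex.ofReal_mul, Real.mul_self_sqrt (Nat.cast_nonneg d)]
      push_cast
      ring
    have expand : ∀ k, dft d v k * (starRingEnd ℂ) (dft d v k)
        = (1/(d:ℂ)) * ∑ l : Fin d, ∑ m : Fin d, (eta d ^ ((k:ℕ)*(l:ℕ)) * (starRingEnd ℂ) (eta d ^ ((k:ℕ)*(m:ℕ))))
            * (v l * (starRingEnd ℂ) (v m)) := by
      intro k
      rw [dft]
      rw [map_mul, map_sum]
      simp only [map_mul]
      rw [mul_mul_mul_comm, Finset.sum_mul_sum]
      congr 1
      · rw [map_div₀, map_one, Complex.conj_ofReal, div_mul_div_comm, one_mul, hsqrt]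
      · apply Finset.sum_congr rfl; intro l _
        apply Finset.sum_congr rfl; intro m _
        ring
    simp only [expand]
    rw [← Finset.mul_sum, Finset.sum_comm]
    have swap : ∀ l : Fin d, ∑ k : Fin d, ∑ m : Fin d, (eta d ^ ((k:ℕ)*(l:ℕ)) * (starRingEnd ℂ) (eta d ^ ((k:ℕ)*(m:ℕ))))
            * (v l * (starRingEnd ℂ) (v m))
        = (d : ℂ) * (v l * (starRingEnd ℂ) (v l)) := by
      intro l
      rw [Finset.sum_comm]
      have hin : ∀ m : Fin d, ∑ k : Fin d, (eta d ^ ((k:ℕ)*(l:ℕ)) * (starRingEnd ℂ) (eta d ^ ((k:ℕ)*(m:ℕ))))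
            * (v l * (starRingEnd ℂ) (v m))
          = (if l = m then (d:ℂ) else 0) * (v l * (starRingEnd ℂ) (v m)) := by
        intro m
        rw [← Finset.sum_mul, eta_orth d hd l m]
      simp only [hin, ite_mul, zero_mul]
      rw [Finset.sum_ite_eq univ l (fun m => (d:ℂ) * (v l * (starRingEnd ℂ) (v m)))]
      simp
    simp only [swap]
    rw [← Finset.mul_sum, ← mul_assoc]
    rw [one_div, inv_mul_cancel₀ (by exact_mod_cast hd), one_mul]
  have cast : ∀ w : ℂ, w * (starRingEnd ℂ) w = ((‖w‖^2 : ℝ) : ℂ) := by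
    intro w
    rw [Complex.mul_conj]
    norm_cast
    exact Complex.normSq_eq_norm_sq w
  simp only [cast] at key
  exact_mod_cast key

/-! ### Three-lines setup -/

noncomputable def bbZ (d : ℕ) (c : Fin d → ℂ) (q : ℝ) : Fin d → ℂ → ℂ := fun k z =>
  if dft d c k = 0 then 0
  else ((‖dft d c k‖ : ℂ) ^ ((q/2 : ℝ) * (1+z) - 1)) * (starRingEnd ℂ) (dft d c k)

noncomputable def ccZ (d : ℕ) (c : Fin d → ℂ) (p : ℝ) : Fin d → ℂ → ℂ := fun l z =>
  if c l = 0 then 0 else ((‖c l‖ : ℂ) ^ ((p/2 : ℝ) * (1+z) - 1)) * c l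

noncomputable def FZ (d : ℕ) (c : Fin d → ℂ) (p q : ℝ) : ℂ → ℂ := fun z =>
  ∑ l, dft d (fun k => bbZ d c q k z) l * ccZ d c p l z

lemma dft_symm (d : ℕ) (a b : Fin d → ℂ) :
    ∑ l, dft d b l * a l = ∑ k, b k * dft d a k := by
  simp only [dft, Finset.sum_mul, Finset.mul_sum]
  rw [Finset.sum_comm]
  apply Finset.sum_congr rfl; intro k _
  apply Finset.sum_congr rfl; intro l _
  rw [mul_comm (k : ℕ) (l : ℕ)]
  ring

lemma norm_dft_le (d : ℕ) (b : Fin d → ℂ) (l : Fin d) :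
    ‖dft d b l‖ ≤ (1/Real.sqrt d) * ∑ k, ‖b k‖ := by
  rw [dft, norm_mul]
  gcongr
  · rw [norm_div, norm_one, Complex.norm_real, Real.norm_eq_abs,
      abs_of_nonneg (Real.sqrt_nonneg _)]
  · refine (norm_sum_le _ _).trans ?_
    apply Finset.sum_le_sum
    intro k _
    rw [norm_mul, norm_pow, eta_abs, one_pow, one_mul]

lemma bbZ_norm (d : ℕ) (c : Fin d → ℂ) (q : ℝ) (hq : 0 < q) (k : Fin d) (z : ℂ)
    (hz : 0 ≤ z.re) : ‖bbZ d c q k z‖ = ‖dft d c k‖ ^ (q/2 * (1+z.re)) := by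
  rw [bbZ]
  rcases eq_or_ne (dft d c k) 0 with h | h
  · rw [if_pos h, h]
    simp only [norm_zero]
    exact (Real.zero_rpow (mul_pos (by positivity : (0:ℝ) < q/2) (by linarith : (0:ℝ) < 1+z.re)).ne').symm
  · rw [if_neg h, norm_mul, 
      Complex.norm_cpow_eq_rpow_re_of_pos (norm_pos_iff.mpr h)]
    have hre : ((((q/2 : ℝ)) : ℂ) * (1+z) - 1).re = q/2 * (1+z.re) - 1 := by
      simp [Complex.sub_re, Complex.mul_re]
    rw [hre, RCLike.norm_conj]
    rw [← Real.rpow_add_one (norm_ne_zero_iff.mpr h)]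
    ring_nf

lemma ccZ_norm (d : ℕ) (c : Fin d → ℂ) (p : ℝ) (hp : 0 < p) (l : Fin d) (z : ℂ)
    (hz : 0 ≤ z.re) : ‖ccZ d c p l z‖ = ‖c l‖ ^ (p/2 * (1+z.re)) := by
  rw [ccZ]
  rcases eq_or_ne (c l) 0 with h | h
  · rw [if_pos h, h]
    simp only [norm_zero]
    exact (Real.zero_rpow (mul_pos (by positivity : (0:ℝ) < p/2) (by linarith : (0:ℝ) < 1+z.re)).ne').symm
  · rw [if_neg h, norm_mul, 
      Complex.norm_cpow_eq_rpow_re_of_pos (norm_pos_iff.mpr h)]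
    have hre : ((((p/2 : ℝ)) : ℂ) * (1+z) - 1).re = p/2 * (1+z.re) - 1 := by
      simp [Complex.sub_re, Complex.mul_re]
    rw [hre]
    rw [← Real.rpow_add_one (norm_ne_zero_iff.mpr h)]
    ring_nf

lemma bbZ_diff (d : ℕ) (c : Fin d → ℂ) (q : ℝ) (k : Fin d) :
    Differentiable ℂ (bbZ d c q k) := by
  unfold bbZ
  rcases eq_or_ne (dft d c k) 0 with h | h
  · simp only [if_pos h]
    exact differentiable_const 0
  · simp only [if_neg h]
    apply Differentiable.mul_const
    apply Differentiable.const_cpow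
    · exact ((differentiable_const _).mul ((differentiable_const 1).add differentiable_id)).sub
        (differentiable_const 1)
    · exact Or.inl (Complex.ofReal_ne_zero.mpr (norm_ne_zero_iff.mpr h))

lemma ccZ_diff (d : ℕ) (c : Fin d → ℂ) (p : ℝ) (l : Fin d) :
    Differentiable ℂ (ccZ d c p l) := by
  unfold ccZ
  rcases eq_or_ne (c l) 0 with h | h
  · simp only [if_pos h]
    exact differentiable_const 0
  · simp only [if_neg h]
    apply Differentiable.mul_const
    apply Differentiable.const_cpow
    · exact ((differentiable_const _).mul ((differentiable_const 1).add differentiable_id)).sub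
        (differentiable_const 1)
    · exact Or.inl (Complex.ofReal_ne_zero.mpr (norm_ne_zero_iff.mpr h))

lemma FZ_diff (d : ℕ) (c : Fin d → ℂ) (p q : ℝ) : Differentiable ℂ (FZ d c p q) := by
  unfold FZ
  apply Differentiable.fun_sum
  intro l _
  apply Differentiable.mul _ (ccZ_diff d c p l)
  simp only [dft]
  apply Differentiable.const_mul
  apply Differentiable.fun_sum
  intro k _
  exact (bbZ_diff d c q k).const_mul _

lemma FZ_norm_le (d : ℕ) (c : Fin d → ℂ) (p q : ℝ) (hp : 0 < p) (hq : 0 < q) (z : ℂ)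
    (hz : 0 ≤ z.re) :
    ‖FZ d c p q z‖ ≤ (1/Real.sqrt d) * (∑ k, ‖dft d c k‖ ^ (q/2*(1+z.re)))
      * (∑ l, ‖c l‖ ^ (p/2*(1+z.re))) := by
  rw [FZ]
  refine (norm_sum_le _ _).trans ?_
  have step : ∀ l : Fin d, ‖dft d (fun k => bbZ d c q k z) l * ccZ d c p l z‖
      ≤ ((1/Real.sqrt d) * ∑ k, ‖dft d c k‖ ^ (q/2*(1+z.re))) * ‖c l‖ ^ (p/2*(1+z.re)) := by
    intro l
    rw [norm_mul, ← ccZ_norm d c p hp l z hz]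
    apply mul_le_mul_of_nonneg_right _ (norm_nonneg _)
    refine (norm_dft_le d _ l).trans ?_
    apply mul_le_mul_of_nonneg_left _ (by positivity)
    apply le_of_eq
    apply Finset.sum_congr rfl
    intro k _
    exact bbZ_norm d c q hq k z hz
  refine (Finset.sum_le_sum fun l _ => step l).trans ?_
  rw [← Finset.mul_sum, mul_assoc]

lemma rpow_mem_bound {s e e0 e1 : ℝ} (hs : 0 ≤ s) (h0 : 0 < e0) (h01 : e0 ≤ e) (h1 : e ≤ e1) :
    s ^ e ≤ s ^ e0 + s ^ e1 := by
  rcases eq_or_lt_of_le hs with h | h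
  · rw [← h, Real.zero_rpow (by linarith : e ≠ 0), Real.zero_rpow (ne_of_gt h0)]
    positivity
  · rcases le_total s 1 with hs1 | hs1
    · have := Real.rpow_le_rpow_of_exponent_ge h hs1 h01
      have h2 : (0:ℝ) ≤ s ^ e1 := by positivity
      linarith
    · have := Real.rpow_le_rpow_of_exponent_le hs1 h1
      have h2 : (0:ℝ) ≤ s ^ e0 := by positivity
      linarith

lemma FZ_bdd (d : ℕ) (c : Fin d → ℂ) (p q : ℝ) (hp : 0 < p) (hq : 0 < q) :
    BddAbove ((norm ∘ (FZ d c p q)) '' Complex.HadamardThreeLines.verticalClosedStrip 0 1) := by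
  refine ⟨(1/Real.sqrt d) * (∑ k, (‖dft d c k‖ ^ (q/2) + ‖dft d c k‖ ^ q))
      * (∑ l, (‖c l‖ ^ (p/2) + ‖c l‖ ^ p)), ?_⟩
  rintro x ⟨z, hz, rfl⟩
  have hz' : z.re ∈ Set.Icc (0:ℝ) 1 := hz
  refine (FZ_norm_le d c p q hp hq z hz'.1).trans ?_
  gcongr (1/Real.sqrt d) * ?_ * ?_ <;> [skip; skip] <;> apply Finset.sum_le_sum <;> intro i _
  · exact rpow_mem_bound (norm_nonneg _) (by positivity)
      (by nlinarith [hz'.1, hz'.2]) (by nlinarith [hz'.1, hz'.2])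
  · exact rpow_mem_bound (norm_nonneg _) (by positivity)
      (by nlinarith [hz'.1, hz'.2]) (by nlinarith [hz'.1, hz'.2])

lemma FZ_edge1 (d : ℕ) (c : Fin d → ℂ) (p q : ℝ) (hp : 0 < p) (hq : 0 < q) (z : ℂ)
    (hz : z.re = 1) :
    ‖FZ d c p q z‖ ≤ (1/Real.sqrt d) * (∑ k, ‖dft d c k‖ ^ q) * (∑ l, ‖c l‖ ^ p) := by
  have := FZ_norm_le d c p q hp hq z (by rw [hz]; norm_num)
  rw [hz] at this
  convert this using 4 <;> ring_nf

lemma sqrt_CS (d : ℕ) (u v : Fin d → ℝ) (hu : ∀ i, 0 ≤ u i) (hv : ∀ i, 0 ≤ v i) :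
    ∑ i, u i * v i ≤ Real.sqrt (∑ i, u i ^ 2) * Real.sqrt (∑ i, v i ^ 2) := by
  have h1 : (∑ i, u i * v i) ^ 2 ≤ (∑ i, u i ^ 2) * ∑ i, v i ^ 2 :=
    Finset.sum_mul_sq_le_sq_mul_sq _ _ _
  have h2 : (0:ℝ) ≤ ∑ i, u i * v i := Finset.sum_nonneg fun i _ => mul_nonneg (hu i) (hv i)
  calc ∑ i, u i * v i = Real.sqrt ((∑ i, u i * v i)^2) := (Real.sqrt_sq h2).symm
    _ ≤ Real.sqrt ((∑ i, u i ^ 2) * ∑ i, v i ^ 2) := Real.sqrt_le_sqrt h1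
    _ = _ := Real.sqrt_mul (Finset.sum_nonneg fun i _ => sq_nonneg _) _

lemma rpow_half_sq {s a : ℝ} (hs : 0 ≤ s) : (s ^ (a/2)) ^ 2 = s ^ a := by
  rw [← Real.rpow_natCast (s ^ (a/2)) 2, ← Real.rpow_mul hs]
  norm_num

lemma FZ_edge0 (d : ℕ) (hd : d ≠ 0) (c : Fin d → ℂ) (p q : ℝ) (hp : 0 < p) (hq : 0 < q) (z : ℂ)
    (hz : z.re = 0) :
    ‖FZ d c p q z‖ ≤ Real.sqrt (∑ k, ‖dft d c k‖ ^ q) * Real.sqrt (∑ l, ‖c l‖ ^ p) := by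
  rw [FZ]
  refine (norm_sum_le _ _).trans ?_
  have hz0 : (0:ℝ) ≤ z.re := by rw [hz]
  have step : ∑ l, ‖dft d (fun k => bbZ d c q k z) l * ccZ d c p l z‖
      = ∑ l, ‖dft d (fun k => bbZ d c q k z) l‖ * ‖ccZ d c p l z‖ := by
    simp [norm_mul]
  rw [step]
  refine (sqrt_CS d _ _ (fun i => norm_nonneg _) (fun i => norm_nonneg _)).trans ?_
  have hpar : ∑ l, ‖dft d (fun k => bbZ d c q k z) l‖ ^ 2 = ∑ k, ‖bbZ d c q k z‖ ^ 2 :=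
    parseval d hd _
  rw [hpar]
  have hb : ∑ k, ‖bbZ d c q k z‖ ^ 2 = ∑ k, ‖dft d c k‖ ^ q := by
    apply Finset.sum_congr rfl
    intro k _
    rw [bbZ_norm d c q hq k z hz0, hz]
    norm_num
    exact rpow_half_sq (norm_nonneg _)
  have hcc : ∑ l, ‖ccZ d c p l z‖ ^ 2 = ∑ l, ‖c l‖ ^ p := by
    apply Finset.sum_congr rfl
    intro l _
    rw [ccZ_norm d c p hp l z hz0, hz]
    norm_num
    exact rpow_half_sq (norm_nonneg _)
  rw [hb, hcc]

lemma FZ_val (d : ℕ) (c : Fin d → ℂ) (t : ℝ) (ht0 : 0 < t) (ht1 : t < 1) :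
    FZ d c (2/(1+t)) (2/(1-t)) (t : ℂ)
      = ((∑ k, ‖dft d c k‖ ^ (2/(1-t)) : ℝ) : ℂ) := by
  have h1t : (1:ℝ) + t ≠ 0 := by linarith
  have h1t' : (1:ℝ) - t ≠ 0 := by linarith
  set p : ℝ := 2/(1+t) with hpdef
  set q : ℝ := 2/(1-t) with hqdef
  have hqpos : 0 < q := by rw [hqdef]; exact div_pos two_pos (by linarith)
  have hcc : ∀ l, ccZ d c p l (t : ℂ) = c l := by
    intro l
    rw [ccZ]
    rcases eq_or_ne (c l) 0 with h | h
    · rw [if_pos h, h]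
    · rw [if_neg h]
      have hexp : (((p/2 : ℝ)) : ℂ) * (1 + (t:ℂ)) - 1 = 0 := by
        have hr : p/2 * (1+t) - 1 = 0 := by rw [hpdef]; field_simp; ring
        have := congrArg (fun x : ℝ => (x : ℂ)) hr
        push_cast at this ⊢
        linear_combination this
      rw [hexp, Complex.cpow_zero, one_mul]
  rw [FZ]
  simp only [hcc]
  rw [dft_symm d c (fun k => bbZ d c q k (t:ℂ))]
  have hterm : ∀ k, bbZ d c q k (t:ℂ) * dft d c k = ((‖dft d c k‖ ^ q : ℝ) : ℂ) := by
    intro k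
    rw [bbZ]
    rcases eq_or_ne (dft d c k) 0 with h | h
    · rw [if_pos h, h, mul_zero, norm_zero, Real.zero_rpow (ne_of_gt hqpos)]
      norm_num
    · rw [if_neg h]
      have hexp : (((q/2 : ℝ)) : ℂ) * (1 + (t:ℂ)) - 1 = ((q - 2 : ℝ) : ℂ) := by
        have hr : q/2 * (1+t) - 1 = q - 2 := by rw [hqdef]; field_simp; ring
        have := congrArg (fun x : ℝ => (x : ℂ)) hr
        push_cast at this ⊢
        linear_combination this
      rw [hexp, ← Complex.ofReal_cpow (norm_nonneg _) (q - 2)]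
      rw [mul_assoc, ← Complex.normSq_eq_conj_mul_self, Complex.normSq_eq_norm_sq]
      rw [← Complex.ofReal_mul]
      congr 1
      rw [← Real.rpow_natCast (‖dft d c k‖) 2,
        ← Real.rpow_add (norm_pos_iff.mpr h)]
      norm_num
  simp only [hterm]
  rw [← Complex.ofReal_sum]

lemma HYlog (d : ℕ) (hd : d ≠ 0) (c : Fin d → ℂ) (hc : ∑ l, ‖c l‖ ^ 2 = 1)
    {t : ℝ} (ht0 : 0 < t) (ht1 : t < 1) :
    ((1-t)/2) * Real.log (∑ k, ‖dft d c k‖ ^ (2/(1-t)))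
      ≤ -(t/2) * Real.log d + ((1+t)/2) * Real.log (∑ l, ‖c l‖ ^ (2/(1+t))) := by
  set p : ℝ := 2/(1+t) with hpdef
  set q : ℝ := 2/(1-t) with hqdef
  have hppos : 0 < p := by rw [hpdef]; positivity
  have hqpos : 0 < q := by rw [hqdef]; exact div_pos two_pos (by linarith)
  set B : ℝ := ∑ k, ‖dft d c k‖ ^ q with hBdef
  set P : ℝ := ∑ l, ‖c l‖ ^ p with hPdef
  -- positivity of B and P
  have hex_c : ∃ l, c l ≠ 0 := by
    by_contra hall
    push_neg at hall
    have h0 : ∑ l, ‖c l‖ ^ 2 = (0:ℝ) := Finset.sum_eq_zero fun l _ => by simp [hall l]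
    rw [h0] at hc
    norm_num at hc
  have hex_f : ∃ k, dft d c k ≠ 0 := by
    by_contra hall
    push_neg at hall
    have hpar := parseval d hd c
    rw [hc] at hpar
    have h0 : ∑ k, ‖dft d c k‖ ^ 2 = (0:ℝ) := Finset.sum_eq_zero fun k _ => by simp [hall k]
    rw [h0] at hpar
    norm_num at hpar
  have hPpos : 0 < P := by
    obtain ⟨l0, hl0⟩ := hex_c
    rw [hPdef]
    apply Finset.sum_pos' (fun l _ => Real.rpow_nonneg (norm_nonneg _) _)
    exact ⟨l0, Finset.mem_univ _, Real.rpow_pos_of_pos (norm_pos_iff.mpr hl0) _⟩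
  have hBpos : 0 < B := by
    obtain ⟨k0, hk0⟩ := hex_f
    rw [hBdef]
    apply Finset.sum_pos' (fun k _ => Real.rpow_nonneg (norm_nonneg _) _)
    exact ⟨k0, Finset.mem_univ _, Real.rpow_pos_of_pos (norm_pos_iff.mpr hk0) _⟩
  have hdpos : (0:ℝ) < d := by
    exact_mod_cast Nat.pos_of_ne_zero hd
  have hsd : 0 < Real.sqrt d := Real.sqrt_pos.mpr hdpos
  -- Hadamard three lines
  have hz : (t : ℂ) ∈ Complex.HadamardThreeLines.verticalClosedStrip 0 1 := by
    simp only [Complex.HadamardThreeLines.verticalClosedStrip, Set.mem_preimage,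
      Complex.ofReal_re, Set.mem_Icc]
    constructor <;> linarith
  have hdiff : DiffContOnCl ℂ (FZ d c p q) (Complex.HadamardThreeLines.verticalStrip 0 1) :=
    (FZ_diff d c p q).diffContOnCl
  have hmain := Complex.HadamardThreeLines.norm_le_interp_of_mem_verticalClosedStrip'
    (f := FZ d c p q) (by norm_num : (0:ℝ) < 1) hz hdiff (FZ_bdd d c p q hppos hqpos)
    (fun z hz' => FZ_edge0 d hd c p q hppos hqpos z hz')
    (fun z hz' => FZ_edge1 d c p q hppos hqpos z hz')
  rw [FZ_val d c t ht0 ht1] at hmain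
  rw [Complex.norm_real, Real.norm_eq_abs, abs_of_pos hBpos, Complex.ofReal_re] at hmain
  -- take logs
  have key : B ≤ (Real.sqrt B * Real.sqrt P) ^ (1-t) * ((1/Real.sqrt d) * B * P) ^ t := by
    simpa only [sub_zero, div_one] using hmain
  have hlog := Real.log_le_log hBpos key
  rw [Real.log_mul (by positivity) (by positivity),
    Real.log_rpow (by positivity), Real.log_rpow (by positivity),
    Real.log_mul (by positivity) (ne_of_gt hPpos),
    Real.log_mul (by positivity) (ne_of_gt hBpos),
    Real.log_mul (ne_of_gt (Real.sqrt_pos.mpr hBpos)) (ne_of_gt (Real.sqrt_pos.mpr hPpos)),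
    Real.log_sqrt (le_of_lt hBpos), Real.log_sqrt (le_of_lt hPpos),
    one_div, Real.log_inv, Real.log_sqrt (le_of_lt hdpos)] at hlog
  nlinarith [hlog]

lemma sum_rpow_hasDeriv (n : ℕ) (w : Fin n → ℝ) (hw : ∀ i, 0 ≤ w i)
    (u : ℝ → ℝ) (u' : ℝ) (hu : HasDerivAt u u' 0) (hu0 : u 0 = 2)
    (hunz : ∀ᶠ t in nhds (0:ℝ), u t ≠ 0) :
    HasDerivAt (fun t => ∑ i, w i ^ (u t)) (∑ i, w i ^ 2 * Real.log (w i) * u') 0 := by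
  apply HasDerivAt.fun_sum
  intro i _
  rcases eq_or_lt_of_le (hw i) with h | h
  · have hev : (fun t => w i ^ (u t)) =ᶠ[nhds (0:ℝ)] (fun _ => (0:ℝ)) := by
      filter_upwards [hunz] with t ht
      rw [← h, Real.zero_rpow ht]
    have h0 : HasDerivAt (fun _ : ℝ => (0:ℝ)) (w i ^ 2 * Real.log (w i) * u') 0 := by
      rw [← h]
      norm_num
      exact hasDerivAt_const 0 0
    exact h0.congr_of_eventuallyEq hev
  · have heq : (fun t => w i ^ (u t)) = fun t => Real.exp (Real.log (w i) * u t) := by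
      funext t
      rw [Real.rpow_def_of_pos h]
    rw [heq]
    have hder : HasDerivAt (fun t => Real.exp (Real.log (w i) * u t))
        (Real.exp (Real.log (w i) * u 0) * (Real.log (w i) * u')) 0 :=
      (hu.const_mul (Real.log (w i))).exp
    refine hder.congr_deriv ?_
    rw [hu0]
    rw [Real.exp_mul, Real.exp_log h, Real.rpow_two]
    ring


theorem entropic_uncertainty (d : ℕ) (c : Fin d → ℂ)
    (hc : ∑ l, ‖c l‖ ^ 2 = 1) :
    Real.log d ≤ shannonEntropy d (fun l => ‖c l‖ ^ 2)
      + shannonEntropy d (fun k => ‖dft d c k‖ ^ 2) := by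
  have hd : d ≠ 0 := by
    rintro rfl
    simp at hc
  have hpar : ∑ k, ‖dft d c k‖ ^ 2 = 1 := by rw [parseval d hd c, hc]
  set Q : ℝ → ℝ := fun t => ∑ k, ‖dft d c k‖ ^ (2/(1-t)) with hQdef
  set P : ℝ → ℝ := fun t => ∑ l, ‖c l‖ ^ (2/(1+t)) with hPdef
  have hQ0 : Q 0 = 1 := by
    rw [hQdef]
    simp only [sub_zero, div_one]
    rw [Finset.sum_congr rfl fun k _ => Real.rpow_two _]
    exact hpar
  have hP0 : P 0 = 1 := by
    rw [hPdef]
    simp only [add_zero, div_one]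
    rw [Finset.sum_congr rfl fun l _ => Real.rpow_two _]
    exact hc
  set g : ℝ → ℝ := fun t => t/2 * Real.log d + ((1-t)/2) * Real.log (Q t)
      - ((1+t)/2) * Real.log (P t) with hgdef
  have hg0 : g 0 = 0 := by
    rw [hgdef]
    simp [hQ0, hP0]
  have hgle : ∀ t ∈ Set.Ioo (0:ℝ) 1, g t ≤ 0 := by
    intro t ht
    have := HYlog d hd c hc ht.1 ht.2
    rw [hgdef]
    simp only [hQdef, hPdef]
    linarith
  -- derivatives
  have hu1 : HasDerivAt (fun t : ℝ => 2/(1-t)) 2 0 := by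
    have := (hasDerivAt_const (0:ℝ) (2:ℝ)).div ((hasDerivAt_id (0:ℝ)).const_sub 1) (by norm_num)
    refine this.congr_deriv ?_
    norm_num [id]
  have hu2 : HasDerivAt (fun t : ℝ => 2/(1+t)) (-2) 0 := by
    have := (hasDerivAt_const (0:ℝ) (2:ℝ)).div ((hasDerivAt_id (0:ℝ)).const_add 1) (by norm_num)
    refine this.congr_deriv ?_
    norm_num [id]
  have hu1nz : ∀ᶠ t in nhds (0:ℝ), 2/(1-t) ≠ 0 := by
    filter_upwards [Iio_mem_nhds (by norm_num : (0:ℝ) < 1)] with t ht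
    have : (1:ℝ) - t > 0 := by simp at ht; linarith
    positivity
  have hu2nz : ∀ᶠ t in nhds (0:ℝ), 2/(1+t) ≠ 0 := by
    filter_upwards [Ioi_mem_nhds (by norm_num : (-1:ℝ) < 0)] with t ht
    have : (1:ℝ) + t > 0 := by simp at ht; linarith
    positivity
  have hQd : HasDerivAt Q (∑ k, ‖dft d c k‖ ^ 2 * Real.log (‖dft d c k‖) * 2) 0 :=
    sum_rpow_hasDeriv d _ (fun k => norm_nonneg _) _ 2 hu1 (by norm_num) hu1nz
  have hPd : HasDerivAt P (∑ l, ‖c l‖ ^ 2 * Real.log (‖c l‖) * (-2)) 0 :=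
    sum_rpow_hasDeriv d _ (fun l => norm_nonneg _) _ (-2) hu2 (by norm_num) hu2nz
  set LQ : ℝ := ∑ k, ‖dft d c k‖ ^ 2 * Real.log (‖dft d c k‖ ^ 2) with hLQdef
  set LP : ℝ := ∑ l, ‖c l‖ ^ 2 * Real.log (‖c l‖ ^ 2) with hLPdef
  have hLQ : (∑ k, ‖dft d c k‖ ^ 2 * Real.log (‖dft d c k‖) * 2) = LQ := by
    rw [hLQdef]
    apply Finset.sum_congr rfl
    intro k _
    rw [Real.log_pow]
    push_cast
    ring
  have hLP : (∑ l, ‖c l‖ ^ 2 * Real.log (‖c l‖) * (-2)) = -LP := by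
    rw [hLPdef, ← Finset.sum_neg_distrib]
    apply Finset.sum_congr rfl
    intro l _
    rw [Real.log_pow]
    push_cast
    ring
  rw [hLQ] at hQd
  rw [hLP] at hPd
  have hlogQ : HasDerivAt (fun t => Real.log (Q t)) LQ 0 := by
    have := hQd.log (by rw [hQ0]; norm_num)
    rw [hQ0] at this
    simpa using this
  have hlogP : HasDerivAt (fun t => Real.log (P t)) (-LP) 0 := by
    have := hPd.log (by rw [hP0]; norm_num)
    rw [hP0] at this
    simpa using this
  have h1 : HasDerivAt (fun t : ℝ => t/2 * Real.log d) (Real.log d / 2) 0 := by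
    have := ((hasDerivAt_id (0:ℝ)).div_const 2).mul_const (Real.log d)
    refine this.congr_deriv ?_
    ring
  have h2 : HasDerivAt (fun t : ℝ => ((1-t)/2) * Real.log (Q t)) (2⁻¹ * LQ) 0 := by
    have hf : HasDerivAt (fun t : ℝ => (1-t)/2) (-(1/2)) 0 := by
      have := ((hasDerivAt_id (0:ℝ)).const_sub 1).div_const 2
      refine this.congr_deriv ?_
      norm_num
    have := hf.mul hlogQ
    rw [hQ0] at this
    refine this.congr_deriv ?_
    simp
  have h3 : HasDerivAt (fun t : ℝ => ((1+t)/2) * Real.log (P t)) (-LP/2) 0 := by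
    have hf : HasDerivAt (fun t : ℝ => (1+t)/2) (1/2) 0 :=
      ((hasDerivAt_id (0:ℝ)).const_add 1).div_const 2
    have := hf.mul hlogP
    rw [hP0] at this
    have h' : HasDerivAt (fun t : ℝ => ((1+t)/2) * Real.log (P t))
        (1/2 * Real.log 1 + (1+0)/2 * -LP) 0 := this
    refine h'.congr_deriv ?_
    rw [Real.log_one]
    ring
  have hgD : HasDerivAt g (Real.log d / 2 + LQ/2 + LP/2) 0 := by
    have := (h1.add h2).sub h3
    refine this.congr_deriv ?_
    ring
  -- slope argument
  have hslope := hasDerivAt_iff_tendsto_slope.mp hgD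
  have hsub : nhdsWithin (0:ℝ) (Set.Ioi 0) ≤ nhdsWithin (0:ℝ) {(0:ℝ)}ᶜ :=
    nhdsWithin_mono 0 (fun x hx => ne_of_gt hx)
  have h2' := hslope.mono_left hsub
  have hev : ∀ᶠ t in nhdsWithin (0:ℝ) (Set.Ioi 0), slope g 0 t ≤ 0 := by
    filter_upwards [Ioo_mem_nhdsGT_of_mem (by constructor <;> norm_num : (0:ℝ) ∈ Set.Ico (0:ℝ) 1)]
      with t ht
    rw [slope_def_field]
    rw [hg0]
    apply div_nonpos_of_nonpos_of_nonneg
    · simpa using hgle t ht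
    · simp
      linarith [ht.1]
  have hD : Real.log d / 2 + LQ/2 + LP/2 ≤ 0 := le_of_tendsto h2' hev
  rw [shannonEntropy, shannonEntropy]
  have : LQ = ∑ k, (fun k => ‖dft d c k‖ ^ 2) k * Real.log ((fun k => ‖dft d c k‖ ^ 2) k) := rfl
  linarith [hD]
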